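/- For all real z, θ_i, θ_j, the absolute values of the following two integrals coincide: |∫_0^{2π} exp(−i·z·(cos(γ − θ_i) − cos(γ − θ_j))) dγ| = |∫_0^{2π} exp(−2i·z·|sin((θ_j − θ_i)/2)|·sin γ) dγ|. (This reduces the continuous-aperture UCA angular similarity to the Bessel integral form |J_0(2z·|sin((θ_i − θ_j)/2)|)|.) -/

import Mathlib

open Real

lemma uca_shift (a c : ℝ) :
    (∫ γ in (0 : ℝ)..(2 * π),
        Complex.exp (((a * Real.sin (γ - c) : ℝ) : ℂ) * Complex.I)) =
      ∫ γ in (0 : ℝ)..(2 * π),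
        Complex.exp (((a * Real.sin γ : ℝ) : ℂ) * Complex.I) := by
  have hper : Function.Periodic
      (fun γ : ℝ => Complex.exp (((a * Real.sin γ : ℝ) : ℂ) * Complex.I)) (2 * π) := by
    intro x
    simp [Real.sin_add_two_pi]
  have h1 := intervalIntegral.integral_comp_sub_right
      (a := (0 : ℝ)) (b := 2 * π)
      (fun γ => Complex.exp (((a * Real.sin γ : ℝ) : ℂ) * Complex.I)) c
  have h2 := hper.intervalIntegral_add_eq (0 - c) 0
  rw [h1]
  have he : (0 : ℝ) - c + 2 * π = 2 * π - c := by ring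
  rw [he] at h2
  simpa using h2

/-- for all real `z, θ_i, θ_j`,
`|∫_0^{2π} exp(−i·z·(cos(γ−θ_i) − cos(γ−θ_j))) dγ|
  = |∫_0^{2π} exp(−2i·z·|sin((θ_j−θ_i)/2)|·sin γ) dγ|`. -/
theorem uca_integral_bessel_form (z θi θj : ℝ) :
    ‖(∫ γ in (0 : ℝ)..(2 * π),
        Complex.exp (((-(z * (Real.cos (γ - θi) - Real.cos (γ - θj))) : ℝ) : ℂ)
          * Complex.I))‖ =
      ‖(∫ γ in (0 : ℝ)..(2 * π),
        Complex.exp (((-(2 * z * |Real.sin ((θj - θi) / 2)| * Real.sin γ) : ℝ) : ℂ)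
          * Complex.I))‖ := by
  set s := Real.sin ((θj - θi) / 2) with hs
  have hkey : ∀ γ : ℝ,
      -(z * (Real.cos (γ - θi) - Real.cos (γ - θj)))
        = (2 * z * s) * Real.sin (γ - (θi + θj) / 2) := by
    intro γ
    have h := Real.cos_sub_cos (γ - θi) (γ - θj)
    have h1 : (γ - θi + (γ - θj)) / 2 = γ - (θi + θj) / 2 := by ring
    have h2 : (γ - θi - (γ - θj)) / 2 = (θj - θi) / 2 := by ring
    rw [h1, h2] at h
    rw [h, hs]; ring
  have hneg : ∀ a : ℝ,
      (∫ γ in (0 : ℝ)..(2 * π),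
          Complex.exp (((-a * Real.sin γ : ℝ) : ℂ) * Complex.I)) =
        ∫ γ in (0 : ℝ)..(2 * π),
          Complex.exp (((a * Real.sin γ : ℝ) : ℂ) * Complex.I) := by
    intro a
    have := uca_shift a π
    rw [← this]
    congr 1
    funext γ
    have : Real.sin (γ - π) = -Real.sin γ := by
      rw [Real.sin_sub]; simp
    rw [this]; ring_nf
  have hL : (∫ γ in (0 : ℝ)..(2 * π),
      Complex.exp (((-(z * (Real.cos (γ - θi) - Real.cos (γ - θj))) : ℝ) : ℂ)
        * Complex.I))
      = ∫ γ in (0 : ℝ)..(2 * π),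
          Complex.exp ((((2 * z * s) * Real.sin γ : ℝ) : ℂ) * Complex.I) := by
    rw [← uca_shift (2 * z * s) ((θi + θj) / 2)]
    congr 1
    funext γ
    rw [hkey γ]
  rw [hL]
  rcases abs_cases s with ⟨h, _⟩ | ⟨h, _⟩
  · rw [h]
    have := hneg (2 * z * s)
    have h2 : ∀ γ : ℝ, -(2 * z * s * Real.sin γ) = -(2 * z * s) * Real.sin γ := by
      intro γ; ring
    simp_rw [h2]
    rw [this]
  · rw [h]
    have h2 : ∀ γ : ℝ, -(2 * z * -s * Real.sin γ) = (2 * z * s) * Real.sin γ := by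
      intro γ; ring
    simp_rw [h2]
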